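/- Fix 1 < q < ∞, r ∈ ℕ with r ≥ 2, t = r^(1/q). Let x be a finitely supported real sequence with all nonzero coordinates of the form ±t^(-j) for nonnegative integers j, with Σᵢ|x(i)|^q = 1 and at least one coordinate of modulus strictly less than 1 (i.e., not equal to ±1). Then there exist finitely supported sequences x_1 < x_2 < … < x_r (after a suitable permutation of coordinates of x) with nonzero coordinates in {±t^(-j) : j ≥ 1}, such that x = x_1 + … + x_r and Σᵢ|x_k(i)|^q = 1/r for each 1 ≤ k ≤ r. -/

import Mathlib

open scoped BigOperators
open List

section aux
open List

lemma splitA {α : Type*} (f : α → ℕ) :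
    ∀ (l : List α) (M : ℕ), l.Pairwise (fun a b => f b ∣ f a) →
      (∀ a ∈ l, f a ∣ M) → (∀ a ∈ l, 0 < f a) → M ≤ (l.map f).sum →
      ∃ l1 l2 : List α, l = l1 ++ l2 ∧ (l1.map f).sum = M := by
  intro l
  induction l with
  | nil =>
    intro M _ _ _ hM
    simp only [map_nil, sum_nil, Nat.le_zero] at hM
    exact ⟨[], [], rfl, by simp [hM]⟩
  | cons a tl ih =>
    intro M hs hdvd hpos hM
    rcases Nat.eq_zero_or_pos M with h0 | hMpos
    · exact ⟨[], a :: tl, rfl, by simp [h0]⟩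
    · have ha : f a ∣ M := hdvd a (by simp)
      have hale : f a ≤ M := Nat.le_of_dvd hMpos ha
      rw [pairwise_cons] at hs
      have hdvd' : ∀ b ∈ tl, f b ∣ M - f a := fun b hb =>
        Nat.dvd_sub (hdvd b (by simp [hb])) (hs.1 b hb)
      have hM' : M - f a ≤ (tl.map f).sum := by
        simp only [map_cons, sum_cons] at hM; omega
      obtain ⟨l1, l2, heq, hsum⟩ := ih (M - f a) hs.2 hdvd'
        (fun b hb => hpos b (by simp [hb])) hM'
      exact ⟨a :: l1, l2, by simp [heq], by simp [hsum]; omega⟩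

lemma splitB {α : Type*} (f : α → ℕ) (M : ℕ) :
    ∀ (c : ℕ) (l : List α), l.Pairwise (fun a b => f b ∣ f a) →
      (∀ a ∈ l, f a ∣ M) → (∀ a ∈ l, 0 < f a) → (l.map f).sum = c * M →
      ∃ P : Fin c → List α, l = (List.ofFn P).flatten ∧
        ∀ k, ((P k).map f).sum = M := by
  intro c
  induction c with
  | zero =>
    intro l _ _ hpos hsum
    have hl : l = [] := by
      rcases l with _ | ⟨a, tl⟩
      · rfl
      · exfalso
        have := hpos a (by simp)
        simp only [map_cons, sum_cons, Nat.zero_mul] at hsum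
        omega
    exact ⟨Fin.elim0, by simp [hl], fun k => k.elim0⟩
  | succ c ihc =>
    intro l hs hdvd hpos hsum
    have hM : M ≤ (l.map f).sum := by
      rw [hsum]; exact Nat.le_mul_of_pos_left M (Nat.succ_pos c)
    obtain ⟨l1, l2, heq, hsum1⟩ := splitA f l M hs hdvd hpos hM
    have hl2sub : l2.Sublist l := heq ▸ List.sublist_append_right l1 l2
    have hmem2 : ∀ b ∈ l2, b ∈ l := fun b hb => hl2sub.mem hb
    have hsum2 : (l2.map f).sum = c * M := by
      have : (l.map f).sum = (l1.map f).sum + (l2.map f).sum := by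
        rw [heq]; simp
      rw [hsum1] at this
      rw [hsum, Nat.succ_mul] at this
      omega
    obtain ⟨P', hP'eq, hP'sum⟩ := ihc l2 (hs.sublist hl2sub)
      (fun b hb => hdvd b (hmem2 b hb)) (fun b hb => hpos b (hmem2 b hb)) hsum2
    refine ⟨Fin.cons l1 P', ?_, ?_⟩
    · rw [List.ofFn_succ]
      simp only [Fin.cons_zero, Fin.cons_succ]
      simp [flatten_cons, ← hP'eq, heq]
    · intro k
      refine Fin.cases ?_ ?_ k
      · simpa using hsum1
      · intro i; simpa using hP'sum i

lemma ord_lemma {α : Type*} [DecidableEq α] {r : ℕ} (P : Fin r → List α) (L : List α)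
    (hP : L = (List.ofFn P).flatten) (hnd : L.Nodup) {k l : Fin r} (hkl : k < l)
    {a b : α} (ha : a ∈ P k) (hb : b ∈ P l) : L.idxOf a < L.idxOf b := by
  set LL := List.ofFn P with hLL
  set u := (LL.take (k + 1)).flatten with hu
  set v := (LL.drop (k + 1)).flatten with hv
  have hsplit : L = u ++ v := by
    rw [hP, hu, hv, ← flatten_append, take_append_drop]
  have hlenLL : LL.length = r := by simp [hLL]
  have hku : (k : ℕ) < (LL.take (k + 1)).length := by
    simp only [length_take, hlenLL]
    omega
  have hPk : P k ∈ LL.take (k + 1) := by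
    have h1 : (LL.take ((k : ℕ) + 1))[(k : ℕ)]'hku = P k := by
      rw [getElem_take]
      simp [hLL]
    exact h1 ▸ List.getElem_mem hku
  have hlv : (l : ℕ) - ((k : ℕ) + 1) < (LL.drop ((k : ℕ) + 1)).length := by
    simp only [length_drop, hlenLL]
    have : (k : ℕ) < l := hkl
    have := l.isLt
    omega
  have hPl : P l ∈ LL.drop ((k : ℕ) + 1) := by
    have h1 : (LL.drop ((k : ℕ) + 1))[(l : ℕ) - ((k : ℕ) + 1)]'hlv = P l := by
      rw [getElem_drop]
      have : (k : ℕ) + 1 + ((l : ℕ) - ((k : ℕ) + 1)) = (l : ℕ) := by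
        have : (k : ℕ) < l := hkl
        omega
      simp only [this]
      simp [hLL]
    exact h1 ▸ List.getElem_mem hlv
  have hau : a ∈ u := mem_flatten.mpr ⟨P k, hPk, ha⟩
  have hbv : b ∈ v := mem_flatten.mpr ⟨P l, hPl, hb⟩
  rw [hsplit] at hnd ⊢
  have hdisj := (List.nodup_append.mp hnd).2.2
  have hbnu : b ∉ u := fun hbu => hdisj b hbu b hbv rfl
  calc idxOf a (u ++ v) = idxOf a u := idxOf_append_of_mem hau
    _ < u.length := idxOf_lt_length_iff.mpr hau
    _ ≤ u.length + idxOf b v := Nat.le_add_right _ _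
    _ = idxOf b (u ++ v) := (idxOf_append_of_notMem hbnu).symm

lemma exists_perm (L : List ℕ) (hnd : L.Nodup) :
    ∃ σ : Equiv.Perm ℕ, ∀ a ∈ L, σ a = L.idxOf a := by
  classical
  set A : Set ℕ := {a | a ∈ L} with hA
  set B : Set ℕ := Set.Iio L.length with hB
  have hmemB : ∀ m, m ∈ B ↔ m < L.length := fun m => Set.mem_Iio
  let e : A ≃ B :=
    { toFun := fun a => ⟨L.idxOf a.1, (hmemB _).mpr (idxOf_lt_length_iff.mpr a.2)⟩
      invFun := fun m => ⟨L.get ⟨m.1, (hmemB _).mp m.2⟩, by exact get_mem _ _⟩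
      left_inv := fun a => Subtype.ext (idxOf_get _)
      right_inv := fun m => Subtype.ext (by
        simpa using get_idxOf hnd ⟨m.1, (hmemB _).mp m.2⟩) }
  have hAfin : A.Finite := L.finite_toSet
  have hBfin : B.Finite := Set.finite_Iio _
  haveI : Infinite ↥Aᶜ := hAfin.infinite_compl.to_subtype
  haveI : Infinite ↥Bᶜ := hBfin.infinite_compl.to_subtype
  obtain ⟨e'⟩ : Nonempty (↥Aᶜ ≃ ↥Bᶜ) := nonempty_equiv_of_countable
  refine ⟨(Equiv.Set.sumCompl A).symm.trans ((e.sumCongr e').trans (Equiv.Set.sumCompl B)),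
    fun a ha => ?_⟩
  have ha' : a ∈ A := ha
  have h1 : (Equiv.Set.sumCompl A).symm a = Sum.inl ⟨a, ha'⟩ :=
    Equiv.Set.sumCompl_symm_apply_of_mem ha'
  simp only [Equiv.trans_apply, h1, Equiv.sumCongr_apply, Sum.map_inl,
    Equiv.Set.sumCompl_apply_inl]
  rfl
end aux

theorem decomposition_claim (q : ℝ) (hq : 1 < q) (r : ℕ) (hr : 2 ≤ r)
    (t : ℝ) (ht : t = (r : ℝ) ^ (1 / q : ℝ)) (x : ℕ →₀ ℝ)
    (hxC : ∀ i, x i ≠ 0 → ∃ j : ℕ, |x i| = t ^ (-(j : ℤ)))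
    (hxnorm : ∑ i ∈ x.support, |x i| ^ q = 1)
    (hsmall : ∃ i ∈ x.support, |x i| < 1) :
    ∃ (σ : Equiv.Perm ℕ) (y : Fin r → ℕ →₀ ℝ),
      Finsupp.equivMapDomain σ x = ∑ k, y k ∧
      (∀ k l : Fin r, k < l →
        ∀ a ∈ (y k).support, ∀ b ∈ (y l).support, a < b) ∧
      (∀ k, ∀ i, y k i ≠ 0 → ∃ j : ℕ, 1 ≤ j ∧ |y k i| = t ^ (-(j : ℤ))) ∧
      (∀ k, ∑ i ∈ (y k).support, |y k i| ^ q = 1 / (r : ℝ)) := by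
  classical
  have hr1 : 1 < r := lt_of_lt_of_le one_lt_two hr
  have hrR : (1:ℝ) < (r:ℝ) := by exact_mod_cast hr1
  have hrpos : (0:ℝ) < (r:ℝ) := by linarith
  have hr0 : (r:ℝ) ≠ 0 := ne_of_gt hrpos
  have hq0 : (0:ℝ) < q := by linarith
  have hqne : q ≠ 0 := ne_of_gt hq0
  have ht0 : (0:ℝ) < t := by rw [ht]; positivity
  -- key power computation
  have hpow : ∀ j : ℕ, (t ^ (-(j:ℤ))) ^ q = (r:ℝ) ^ (-(j:ℤ)) := by
    intro j
    have h1 : t ^ (-(j:ℤ)) = t ^ ((-(j:ℤ) : ℤ) : ℝ) := (Real.rpow_intCast t _).symm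
    rw [h1, ← Real.rpow_mul ht0.le, ht, ← Real.rpow_mul hrpos.le]
    have h2 : 1 / q * (((-(j:ℤ) : ℤ) : ℝ) * q) = ((-(j:ℤ) : ℤ) : ℝ) := by
      field_simp
    rw [h2, Real.rpow_intCast]
  set s := x.support with hs
  have habs : ∀ i ∈ s, 0 < |x i| := fun i hi => abs_pos.mpr (Finsupp.mem_support_iff.mp hi)
  set j : ℕ → ℕ := fun i => if h : x i ≠ 0 then (hxC i h).choose else 0 with hjdef
  have hj : ∀ i ∈ s, |x i| = t ^ (-(j i : ℤ)) := by
    intro i hi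
    have h : x i ≠ 0 := Finsupp.mem_support_iff.mp hi
    simp only [hjdef, dif_pos h]
    exact (hxC i h).choose_spec
  have hterm : ∀ i ∈ s, |x i| ^ q = (r:ℝ) ^ (-(j i : ℤ)) := fun i hi => by
    rw [hj i hi, hpow]
  have htermpos : ∀ i ∈ s, 0 < |x i| ^ q := fun i hi =>
    Real.rpow_pos_of_pos (habs i hi) q
  obtain ⟨i₀, hi₀, hxi₀⟩ := hsmall
  have hjpos : ∀ i ∈ s, 1 ≤ j i := by
    intro i hi
    by_contra h
    have hji : j i = 0 := by omega
    have h1 : |x i| = 1 := by rw [hj i hi, hji]; norm_num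
    have hine : i ≠ i₀ := fun he => by rw [← he, h1] at hxi₀; exact lt_irrefl 1 hxi₀
    have hsub : ({i, i₀} : Finset ℕ) ⊆ s := by
      intro a ha
      rcases Finset.mem_insert.mp ha with h' | h'
      · rwa [h']
      · rw [Finset.mem_singleton.mp h']; exact hi₀
    have hle : ∑ a ∈ ({i, i₀} : Finset ℕ), |x a| ^ q ≤ ∑ a ∈ s, |x a| ^ q :=
      Finset.sum_le_sum_of_subset_of_nonneg hsub (fun a ha _ => (htermpos a ha).le)
    rw [Finset.sum_pair hine, hxnorm, h1, Real.one_rpow] at hle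
    have := htermpos i₀ hi₀
    linarith
  have hsne : s.Nonempty := ⟨i₀, hi₀⟩
  set J := s.sup j with hJ
  have hJle : ∀ i ∈ s, j i ≤ J := fun i hi => Finset.le_sup hi
  have hJ1 : 1 ≤ J := le_trans (hjpos i₀ hi₀) (Finset.le_sup hi₀)
  set f : ℕ → ℕ := fun i => r ^ (J - j i) with hf
  have hfcast : ∀ i ∈ s, (f i : ℝ) = (r:ℝ) ^ (J:ℤ) * (r:ℝ) ^ (-(j i:ℤ)) := by
    intro i hi
    have h1 : ((J - j i : ℕ) : ℤ) = (J:ℤ) + (-(j i:ℤ)) := by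
      have := hJle i hi
      omega
    calc (f i : ℝ) = (r:ℝ) ^ ((J - j i : ℕ) : ℤ) := by
          rw [zpow_natCast, Nat.cast_pow]
      _ = (r:ℝ) ^ (J:ℤ) * (r:ℝ) ^ (-(j i:ℤ)) := by rw [h1, zpow_add₀ hr0]
  have hSnorm : ∑ i ∈ s, (r:ℝ) ^ (-(j i:ℤ)) = 1 := by
    rw [← hxnorm]
    exact (Finset.sum_congr rfl hterm).symm
  have hfsum : ∑ i ∈ s, f i = r ^ J := by
    have hc : ((∑ i ∈ s, f i : ℕ) : ℝ) = ((r ^ J : ℕ) : ℝ) := by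
      rw [Nat.cast_sum, Finset.sum_congr rfl hfcast, ← Finset.mul_sum, hSnorm, mul_one]
      rw [Nat.cast_pow, zpow_natCast]
    exact_mod_cast hc
  -- sorted list
  haveI : IsTotal ℕ (fun a b => j a ≤ j b) := ⟨fun a b => le_total _ _⟩
  haveI : IsTrans ℕ (fun a b => j a ≤ j b) := ⟨fun a b c => le_trans⟩
  set L := List.insertionSort (fun a b => j a ≤ j b) s.toList with hL
  have hLperm : L.Perm s.toList := perm_insertionSort _ _
  have hLnd : L.Nodup := hLperm.nodup_iff.mpr s.nodup_toList
  have hLmem : ∀ a, a ∈ L ↔ a ∈ s := fun a => by rw [hLperm.mem_iff, Finset.mem_toList]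
  have hLsor : L.Pairwise (fun a b => j a ≤ j b) := pairwise_insertionSort _ _
  have hLsum : (L.map f).sum = r * r ^ (J - 1) := by
    have h1 : (L.map f).sum = (s.toList.map f).sum := (hLperm.map f).sum_eq
    rw [h1, Finset.sum_map_toList, hfsum, ← pow_succ']
    congr 1
    omega
  have hsorted_dvd : L.Pairwise (fun a b => f b ∣ f a) :=
    List.Pairwise.imp (fun {a b} h => pow_dvd_pow r (Nat.sub_le_sub_left h J)) hLsor
  obtain ⟨P, hPeq, hPsum⟩ := splitB f (r ^ (J - 1)) r L hsorted_dvd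
    (fun a ha => pow_dvd_pow r (by have := hjpos a ((hLmem a).mp ha); omega))
    (fun a _ => pow_pos (by omega) _) hLsum
  have hPsub : ∀ k, ∀ a ∈ P k, a ∈ L := by
    intro k a ha
    rw [hPeq]
    exact mem_flatten.mpr ⟨P k, List.mem_ofFn.mpr ⟨k, rfl⟩, ha⟩
  have hndP : (∀ l ∈ List.ofFn P, l.Nodup) ∧ (List.ofFn P).Pairwise List.Disjoint := by
    rw [← List.nodup_flatten, ← hPeq]; exact hLnd
  have hPnd : ∀ k, (P k).Nodup := fun k => hndP.1 (P k) (List.mem_ofFn.mpr ⟨k, rfl⟩)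
  have hPdisj : ∀ k l : Fin r, k ≠ l → ∀ a ∈ P k, a ∉ P l := by
    have hpw := hndP.2
    rw [List.pairwise_ofFn] at hpw
    intro k l hkl a hak hal
    rcases lt_or_gt_of_ne hkl with h | h
    · exact hpw h hak hal
    · exact hpw h hal hak
  obtain ⟨σ, hσ⟩ := exists_perm L hLnd
  set w : Fin r → (ℕ →₀ ℝ) := fun k => x.filter (· ∈ P k) with hw
  have hwsupp : ∀ k, (w k).support = (P k).toFinset := by
    intro k
    ext a
    simp only [hw, Finsupp.support_filter, Finset.mem_filter, List.mem_toFinset]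
    constructor
    · exact fun h => h.2
    · exact fun h => ⟨(hLmem a).mp (hPsub k a h), h⟩
  have hmapsupp : ∀ k, (Finsupp.equivMapDomain σ (w k)).support
      = (w k).support.image σ := by
    intro k
    rw [Finsupp.equivMapDomain_eq_mapDomain, Finsupp.mapDomain_support_of_injective σ.injective]
  refine ⟨σ, fun k => Finsupp.equivMapDomain σ (w k), ?_, ?_, ?_, ?_⟩
  · -- sum decomposition
    ext m
    rw [Finsupp.finset_sum_apply]
    simp only [Finsupp.equivMapDomain_apply, Finsupp.filter_apply, hw]
    set a := σ.symm m with ha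
    by_cases hxa : x a = 0
    · rw [hxa]
      simp
    · have haS : a ∈ s := Finsupp.mem_support_iff.mpr hxa
      have haL : a ∈ L := (hLmem a).mpr haS
      rw [hPeq] at haL
      obtain ⟨la, hla, hala⟩ := mem_flatten.mp haL
      obtain ⟨k0, rfl⟩ := List.mem_ofFn.mp hla
      rw [Finset.sum_eq_single k0]
      · rw [if_pos hala]
      · intro k _ hk
        rw [if_neg]
        exact fun h => hPdisj k0 k (Ne.symm hk) a hala h
      · intro h
        exact absurd (Finset.mem_univ k0) h
  · -- ordering
    intro k l hkl a' ha' b' hb'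
    rw [hmapsupp] at ha' hb'
    obtain ⟨a, ha, rfl⟩ := Finset.mem_image.mp ha'
    obtain ⟨b, hb, rfl⟩ := Finset.mem_image.mp hb'
    rw [hwsupp, List.mem_toFinset] at ha hb
    have haL : a ∈ L := hPsub k a ha
    have hbL : b ∈ L := hPsub l b hb
    rw [hσ a haL, hσ b hbL]
    exact ord_lemma P L hPeq hLnd hkl ha hb
  · -- values
    intro k i hyi
    rw [Finsupp.equivMapDomain_apply, Finsupp.filter_apply] at hyi
    by_cases hmem : σ.symm i ∈ P k
    · rw [if_pos hmem] at hyi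
      have haS : σ.symm i ∈ s := Finsupp.mem_support_iff.mpr hyi
      refine ⟨j (σ.symm i), hjpos _ haS, ?_⟩
      rw [Finsupp.equivMapDomain_apply, Finsupp.filter_apply, if_pos hmem]
      exact hj _ haS
    · rw [if_neg hmem] at hyi
      exact absurd rfl hyi
  · -- norms
    intro k
    rw [hmapsupp, Finset.sum_image (fun a _ b _ h => σ.injective h)]
    have happ : ∀ a ∈ (w k).support,
        |Finsupp.equivMapDomain σ (w k) (σ a)| ^ q = |x a| ^ q := by
      intro a ha
      rw [Finsupp.equivMapDomain_apply, Equiv.symm_apply_apply]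
      congr 2
      rw [hwsupp, List.mem_toFinset] at ha
      simp only [hw, Finsupp.filter_apply, if_pos ha]
    rw [Finset.sum_congr rfl happ, hwsupp, List.sum_toFinset _ (hPnd k)]
    have hmapc : List.map (fun a => |x a| ^ q) (P k)
        = List.map (fun a => (f a : ℝ) * ((r:ℝ) ^ (J:ℤ))⁻¹) (P k) := by
      apply List.map_congr_left
      intro a ha
      have haS : a ∈ s := (hLmem a).mp (hPsub k a ha)
      rw [hterm a haS, hfcast a haS]
      have hzne : (r:ℝ) ^ (J:ℤ) ≠ 0 := zpow_ne_zero _ hr0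
      field_simp
    rw [hmapc, List.sum_map_mul_right]
    have hcast : (List.map (fun a => (f a : ℝ)) (P k)).sum
        = (((P k).map f).sum : ℝ) := by
      rw [Nat.cast_list_sum, List.map_map]
      rfl
    rw [hcast, hPsum k]
    have hJs : J - 1 + 1 = J := by omega
    rw [zpow_natCast, ← hJs, pow_succ]
    have hp0 : (r:ℝ) ^ (J - 1) ≠ 0 := pow_ne_zero _ hr0
    push_cast
    field_simp
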